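/- Let $\mathfrak{g}=\mathfrak{h}_{2n+1}\times\mathbb{R}^{2k+1}$ where $\mathfrak{h}_{2n+1}$ is the real Heisenberg Lie algebra. If $n\geq 2$ and $1\le r\le n-1$, then for the abelian complex structure $J_r$ ($J_re_{2i-1}=-e_{2i}$ for $i\le r$, $J_re_{2i-1}=e_{2i}$ for $i>r$, $Jz_{2j}=-z_{2j+1}$) there exists a $J_r$-compatible inner product whose fundamental form is balanced; explicitly, the basis $f_1=\sqrt{n+1-2r}\,e_1$, $f_2=\sqrt{n+1-2r}\,e_2$, $f_{2i}=-e_{2i}$ for $i>r$, $f_i=e_i$ otherwise, together with $z_0,\ldots,z_{2k+1}$, is $J_r$-adapted and satisfies $\sum_i[J_rf_i,f_i]=0$ (here $n+1-2r$ may be assumed positive by replacing $r$ with $n-r$). -/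

import Mathlib

noncomputable def auxForm {L : Type*} [AddCommGroup L] [Module ℝ L] {ι : Type*} [Fintype ι]
    (b : Module.Basis ι ℝ L) (d : ι → ℝ) : L →ₗ[ℝ] L →ₗ[ℝ] ℝ :=
  LinearMap.mk₂ ℝ (fun x y => ∑ p, d p * (b.repr x p * b.repr y p))
    (by intro x x' y; simp [add_mul, mul_add, Finset.sum_add_distrib])
    (by intro a x y; simp [Finset.mul_sum]; exact Finset.sum_congr rfl fun i _ => by ring)
    (by intro x y y'; simp [add_mul, mul_add, Finset.sum_add_distrib])
    (by intro a x y; simp [Finset.mul_sum]; exact Finset.sum_congr rfl fun i _ => by ring)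

theorem auxForm_apply {L : Type*} [AddCommGroup L] [Module ℝ L] {ι : Type*} [Fintype ι]
    (b : Module.Basis ι ℝ L) (d : ι → ℝ) (x y : L) :
    auxForm b d x y = ∑ p, d p * (b.repr x p * b.repr y p) := rfl

theorem auxForm_basis {L : Type*} [AddCommGroup L] [Module ℝ L] {ι : Type*} [Fintype ι]
    [DecidableEq ι] (b : Module.Basis ι ℝ L) (d : ι → ℝ) (p q : ι) :
    auxForm b d (b p) (b q) = if p = q then d p else 0 := by
  rw [auxForm_apply]
  simp [Finsupp.single_apply, ite_and, mul_ite]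
  split <;> simp_all

noncomputable def hbD (n k r : ℕ) (c : ℝ) : (Fin n × Bool) ⊕ (Fin (k + 1) × Bool) → ℝ :=
  Sum.elim (fun x => if (x.1 : ℕ) = 0 then c⁻¹ else 1) fun _ => 1

def hbSw (n k : ℕ) : (Fin n × Bool) ⊕ (Fin (k + 1) × Bool) → (Fin n × Bool) ⊕ (Fin (k + 1) × Bool) :=
  Sum.map (fun x => (x.1, !x.2)) fun x => (x.1, !x.2)

def hbEps (n k r : ℕ) : (Fin n × Bool) ⊕ (Fin (k + 1) × Bool) → ℝ :=
  Sum.elim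
    (fun x => if x.2 = false then (if (x.1 : ℕ) < r then -1 else 1)
      else (if (x.1 : ℕ) < r then 1 else -1))
    fun x => if x.2 = false then -1 else 1

noncomputable def hbCf (n k r : ℕ) (c : ℝ) : (Fin n × Bool) ⊕ (Fin (k + 1) × Bool) → ℝ :=
  Sum.elim
    (fun x => if (x.1 : ℕ) = 0 then Real.sqrt c
      else if r ≤ (x.1 : ℕ) ∧ x.2 = true then -1 else 1)
    fun _ => 1



/-- On `𝔤 = 𝔥_{2n+1} × ℝ^{2k+1}` (Heisenberg times an abelian factor), with the usual
basis `e₁, …, e_{2n}, z₀, …, z_{2k+1}` (only nonzero brackets `⁅e_{2i-1}, e_{2i}⁆ = z₀`;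
here `e`'s are indexed by `Fin n × Bool` and `z`'s by `Fin (k+1) × Bool`, with `z₀`
corresponding to `(0, false)`), suppose `n ≥ 2` and `1 ≤ r ≤ n - 1` with `2r ≤ n`
(the latter may be assumed by replacing `r` with `n - r`).  For the abelian complex
structure `J_r` (`J_r e_{2i-1} = -e_{2i}` for `i ≤ r`, `J_r e_{2i-1} = e_{2i}` for
`i > r`, `J_r z_{2j} = -z_{2j+1}`), the modified basis
`f₁ = √(n+1-2r) e₁`, `f₂ = √(n+1-2r) e₂`, `f_{2i} = -e_{2i}` for `i > r`, `fᵢ = eᵢ`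
otherwise, together with the `z`'s, is `J_r`-adapted and satisfies
`∑ᵢ ⁅J_r fᵢ, fᵢ⁆ = 0`; hence there is a `J_r`-compatible inner product (making this
basis orthonormal) whose fundamental form is balanced. -/
theorem heisenberg_balanced_structure {L : Type*} [LieRing L] [LieAlgebra ℝ L]
    (n k r : ℕ) (hn : 2 ≤ n) (hr1 : 1 ≤ r) (hr2 : r ≤ n - 1) (hr3 : 2 * r ≤ n)
    (b : Module.Basis ((Fin n × Bool) ⊕ (Fin (k + 1) × Bool)) ℝ L)
    -- bracket relations of 𝔥_{2n+1} × ℝ^{2k+1}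
    (hbr1 : ∀ i : Fin n, ⁅b (Sum.inl (i, false)), b (Sum.inl (i, true))⁆ =
      b (Sum.inr (⟨0, Nat.succ_pos k⟩, false)))
    (hbr2 : ∀ i j : Fin n, i ≠ j → ∀ s t : Bool,
      ⁅b (Sum.inl (i, s)), b (Sum.inl (j, t))⁆ = 0)
    (hbr3 : ∀ p q, ⁅b (Sum.inl p), b (Sum.inr q)⁆ = 0)
    (hbr4 : ∀ q q', ⁅b (Sum.inr q), b (Sum.inr q')⁆ = 0)
    -- the abelian complex structure J_r
    (J : L →ₗ[ℝ] L) (hJ2 : ∀ x, J (J x) = -x)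
    (hJm : ∀ i : Fin n, (i : ℕ) < r →
      J (b (Sum.inl (i, false))) = -b (Sum.inl (i, true)))
    (hJp : ∀ i : Fin n, r ≤ (i : ℕ) →
      J (b (Sum.inl (i, false))) = b (Sum.inl (i, true)))
    (hJz : ∀ q : Fin (k + 1), J (b (Sum.inr (q, false))) = -b (Sum.inr (q, true)))
    -- the modified basis f
    (f : (Fin n × Bool) ⊕ (Fin (k + 1) × Bool) → L)
    (hf0 : ∀ s : Bool, f (Sum.inl (⟨0, by omega⟩, s)) =
      Real.sqrt ((n : ℝ) + 1 - 2 * r) • b (Sum.inl (⟨0, by omega⟩, s)))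
    (hfe : ∀ i : Fin n, 0 < (i : ℕ) → ∀ s : Bool,
      f (Sum.inl (i, s)) =
        if r ≤ (i : ℕ) ∧ s = true then -b (Sum.inl (i, s)) else b (Sum.inl (i, s)))
    (hfz : ∀ q, f (Sum.inr q) = b (Sum.inr q)) :
    (∀ i : Fin n, J (f (Sum.inl (i, false))) = -f (Sum.inl (i, true))) ∧
      (∀ q : Fin (k + 1), J (f (Sum.inr (q, false))) = -f (Sum.inr (q, true))) ∧
      (∑ p : (Fin n × Bool) ⊕ (Fin (k + 1) × Bool), ⁅J (f p), f p⁆ = 0) ∧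
      ∃ g : L →ₗ[ℝ] L →ₗ[ℝ] ℝ, (∀ x y, g x y = g y x) ∧
        (∀ x : L, x ≠ 0 → 0 < g x x) ∧ (∀ x y, g (J x) (J y) = g x y) ∧
        (∀ p q, g (f p) (f q) = if p = q then (1 : ℝ) else 0) := by
  classical
  have hnpos : 0 < n := by omega
  set c : ℝ := (n : ℝ) + 1 - 2 * r with hc
  have hrn : (2 * r : ℝ) ≤ (n : ℝ) := by exact_mod_cast hr3
  have hcpos : 0 < c := by rw [hc]; push_cast at hrn ⊢; linarith
  have hsq : Real.sqrt c * Real.sqrt c = c := Real.mul_self_sqrt hcpos.le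
  -- J on the true-part of the basis
  have hJbt : ∀ i : Fin n, (i : ℕ) < r →
      J (b (Sum.inl (i, true))) = b (Sum.inl (i, false)) := by
    intro i hi
    have h := hJ2 (b (Sum.inl (i, false)))
    rw [hJm i hi, map_neg] at h
    exact neg_injective h
  have hJpt : ∀ i : Fin n, r ≤ (i : ℕ) →
      J (b (Sum.inl (i, true))) = -b (Sum.inl (i, false)) := by
    intro i hi
    have h := hJ2 (b (Sum.inl (i, false)))
    rwa [hJp i hi] at h
  have hJzt : ∀ q : Fin (k + 1),
      J (b (Sum.inr (q, true))) = b (Sum.inr (q, false)) := by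
    intro q
    have h := hJ2 (b (Sum.inr (q, false)))
    rw [hJz q, map_neg] at h
    exact neg_injective h
  -- conjunct 1
  have conj1 : ∀ i : Fin n, J (f (Sum.inl (i, false))) = -f (Sum.inl (i, true)) := by
    intro i
    rcases Nat.eq_zero_or_pos (i : ℕ) with h0 | hpos
    · have hi : i = ⟨0, hnpos⟩ := Fin.ext h0
      rw [hi, hf0 false, hf0 true, map_smul, hJm ⟨0, hnpos⟩ (by show 0 < r; omega), smul_neg]
    · rw [hfe i hpos false, hfe i hpos true]
      by_cases hir : (i : ℕ) < r
      · rw [if_neg (by simp), if_neg (by simp [Nat.not_le.mpr hir]), hJm i hir]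
      · rw [if_neg (by simp), if_pos ⟨Nat.le_of_not_lt hir, rfl⟩,
          hJp i (Nat.le_of_not_lt hir), neg_neg]
  have conj1' : ∀ i : Fin n, J (f (Sum.inl (i, true))) = f (Sum.inl (i, false)) := by
    intro i
    have h := hJ2 (f (Sum.inl (i, false)))
    rw [conj1 i, map_neg] at h
    exact neg_injective h
  have conj2 : ∀ q : Fin (k + 1), J (f (Sum.inr (q, false))) = -f (Sum.inr (q, true)) := by
    intro q
    rw [hfz, hfz]; exact hJz q
  refine ⟨conj1, conj2, ?_, ?_⟩
  · -- the balanced sum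
    rw [Fintype.sum_sum_type]
    have hz : ∑ p : Fin (k + 1) × Bool, ⁅J (f (Sum.inr p)), f (Sum.inr p)⁆ = 0 := by
      apply Finset.sum_eq_zero
      rintro ⟨q, s⟩ -
      cases s
      · rw [hfz, hJz, neg_lie, hbr4, neg_zero]
      · rw [hfz, hJzt, hbr4]
    rw [hz, add_zero, Fintype.sum_prod_type]
    have key : ∀ i : Fin n,
        (∑ s : Bool, ⁅J (f (Sum.inl (i, s))), f (Sum.inl (i, s))⁆) =
        (if (i : ℕ) = 0 then 2 * c else if (i : ℕ) < r then 2 else -2) •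
          b (Sum.inr (⟨0, Nat.succ_pos k⟩, false)) := by
      intro i
      rw [Fintype.sum_bool, conj1 i, conj1' i, neg_lie, ← lie_skew (f (Sum.inl (i, true)))]
      have hB : ⁅f (Sum.inl (i, false)), f (Sum.inl (i, true))⁆ =
          (if (i : ℕ) = 0 then c else if (i : ℕ) < r then 1 else -1) •
            b (Sum.inr (⟨0, Nat.succ_pos k⟩, false)) := by
        rcases Nat.eq_zero_or_pos (i : ℕ) with h0 | hpos
        · have hi : i = ⟨0, hnpos⟩ := Fin.ext h0
          rw [hi, hf0 false, hf0 true, smul_lie, lie_smul, smul_smul, hsq, hbr1]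
          simp
        · rw [hfe i hpos false, hfe i hpos true, if_neg (by simp)]
          have h0 : ¬ (i : ℕ) = 0 := by omega
          by_cases hir : (i : ℕ) < r
          · rw [if_neg (by simp [Nat.not_le.mpr hir]), hbr1]
            simp [h0, hir]
          · rw [if_pos ⟨Nat.le_of_not_lt hir, rfl⟩, lie_neg, hbr1]
            simp [h0, hir]
      rw [hB, neg_neg, ← add_smul]
      congr 1
      split_ifs <;> ring
    calc ∑ i : Fin n, ∑ s : Bool, ⁅J (f (Sum.inl (i, s))), f (Sum.inl (i, s))⁆
        = ∑ i : Fin n, (if (i : ℕ) = 0 then 2 * c else if (i : ℕ) < r then 2 else -2) •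
            b (Sum.inr (⟨0, Nat.succ_pos k⟩, false)) := Finset.sum_congr rfl fun i _ => key i
      _ = (∑ i : Fin n, (if (i : ℕ) = 0 then 2 * c else if (i : ℕ) < r then 2 else -2)) •
            b (Sum.inr (⟨0, Nat.succ_pos k⟩, false)) := (Finset.sum_smul).symm
      _ = 0 := by
          have hsum : (∑ i : Fin n, (if (i : ℕ) = 0 then 2 * c else if (i : ℕ) < r then 2 else -2)) = 0 := by
            rw [Fin.sum_univ_eq_sum_range (fun i => if i = 0 then 2 * c else if i < r then 2 else -2)]
            have hw : ∀ i, (if i = 0 then 2 * c else if i < r then (2:ℝ) else -2) =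
                (2 * c - 2) * (if i = 0 then 1 else 0) + 4 * (if i < r then 1 else 0) - 2 := by
              intro i
              by_cases h0 : i = 0
              · have h1 : i < r := by omega
                rw [if_pos h0, if_pos h0, if_pos h1]; ring
              · by_cases h1 : i < r
                · rw [if_neg h0, if_neg h0, if_pos h1, if_pos h1]; ring
                · rw [if_neg h0, if_neg h0, if_neg h1, if_neg h1]; ring
            rw [Finset.sum_congr rfl fun i _ => hw i]
            rw [Finset.sum_sub_distrib, Finset.sum_add_distrib, ← Finset.mul_sum, ← Finset.mul_sum]
            have e1 : (∑ i ∈ Finset.range n, (if i = 0 then (1:ℝ) else 0)) = 1 := by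
              rw [Finset.sum_ite_eq' (Finset.range n) 0 (fun _ => (1:ℝ))]
              simp [hnpos]
            have e2 : (∑ i ∈ Finset.range n, (if i < r then (1:ℝ) else 0)) = r := by
              rw [Finset.sum_ite, Finset.sum_const, Finset.sum_const]
              have : (Finset.range n).filter (· < r) = Finset.range r := by
                ext x; simp [Finset.mem_filter, Finset.mem_range]; omega
              simp [this]
            rw [e1, e2, Finset.sum_const, Finset.card_range]
            simp only [hc, nsmul_eq_mul]
            push_cast
            ring
          rw [hsum, zero_smul]
  · -- the inner product
    set d := hbD n k r c with hd
    refine ⟨auxForm b d, ?_, ?_, ?_, ?_⟩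
    · intro x y
      rw [auxForm_apply, auxForm_apply]
      exact Finset.sum_congr rfl fun p _ => by ring
    · intro x hx
      have hdpos : ∀ p, 0 < d p := by
        rintro (⟨i, s⟩ | ⟨q, s⟩) <;> simp only [hd, hbD, Sum.elim_inl, Sum.elim_inr]
        · split
          · exact inv_pos.mpr hcpos
          · norm_num
        · norm_num
      obtain ⟨p, hp⟩ : ∃ p, b.repr x p ≠ 0 := by
        by_contra h
        push_neg at h
        exact hx ((LinearEquiv.map_eq_zero_iff b.repr).mp (Finsupp.ext h))
      rw [auxForm_apply]
      refine Finset.sum_pos' (fun p _ => mul_nonneg (hdpos p).le (mul_self_nonneg _))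
        ⟨p, Finset.mem_univ p, mul_pos (hdpos p) (mul_self_pos.mpr hp)⟩
    · -- J-invariance
      set sw := hbSw n k with hsw
      set eps := hbEps n k r with heps
      have hsw2 : ∀ p, sw (sw p) = p := by
        rintro (⟨i, s⟩ | ⟨q, s⟩) <;> simp [hsw, hbSw]
      have heps2 : ∀ p, eps p * eps p = 1 := by
        rintro (⟨i, s⟩ | ⟨q, s⟩) <;>
          simp only [heps, hbEps, Sum.elim_inl, Sum.elim_inr] <;>
          split <;> (try split) <;> norm_num
      have hdsw : ∀ p, d (sw p) = d p := by
        rintro (⟨i, s⟩ | ⟨q, s⟩) <;> rfl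
      have hJb : ∀ p, J (b p) = eps p • b (sw p) := by
        rintro (⟨i, s⟩ | ⟨q, s⟩)
        · by_cases hir : (i : ℕ) < r
          · cases s
            · rw [hJm i hir]; simp [heps, hbEps, hsw, hbSw, hir]
            · rw [hJbt i hir]; simp [heps, hbEps, hsw, hbSw, hir]
          · cases s
            · rw [hJp i (Nat.le_of_not_lt hir)]; simp [heps, hbEps, hsw, hbSw, hir]
            · rw [hJpt i (Nat.le_of_not_lt hir)]; simp [heps, hbEps, hsw, hbSw, hir]
        · cases s
          · rw [hJz q]; simp [heps, hbEps, hsw, hbSw]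
          · rw [hJzt q]; simp [heps, hbEps, hsw, hbSw]
      have hGg : ∀ p q, auxForm b d (J (b p)) (J (b q)) = auxForm b d (b p) (b q) := by
        intro p q
        rw [hJb p, hJb q]
        simp only [map_smul, LinearMap.smul_apply, smul_eq_mul, auxForm_basis]
        by_cases hpq : p = q
        · subst hpq
          simp [← mul_assoc, heps2, hdsw]
        · have hsne : sw p ≠ sw q := fun h => hpq (by rw [← hsw2 p, h, hsw2])
          simp [hpq, hsne]
      have hext : ((auxForm b d).comp J).compl₂ J = auxForm b d :=
        b.ext fun p => b.ext fun q => by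
          simpa [LinearMap.compl₂_apply, LinearMap.comp_apply] using hGg p q
      intro x y
      have := LinearMap.congr_fun (LinearMap.congr_fun hext x) y
      simpa [LinearMap.compl₂_apply, LinearMap.comp_apply] using this
    · -- orthonormality of f
      set cf := hbCf n k r c with hcf
      have hfb : ∀ p, f p = cf p • b p := by
        rintro (⟨i, s⟩ | q)
        · rcases Nat.eq_zero_or_pos (i : ℕ) with h0 | hpos
          · have hi : i = ⟨0, hnpos⟩ := Fin.ext h0
            rw [hi, hf0 s]
            simp [hcf, hbCf]
          · have h0 : ¬ (i : ℕ) = 0 := by omega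
            rw [hfe i hpos s]
            by_cases hrs : r ≤ (i : ℕ) ∧ s = true
            · rw [if_pos hrs]; simp [hcf, hbCf, h0, hrs]
            · rw [if_neg hrs]; simp [hcf, hbCf, h0, hrs]
        · rw [hfz q]; simp [hcf, hbCf]
      have hcfd : ∀ p, cf p * cf p * d p = 1 := by
        rintro (⟨i, s⟩ | ⟨q, s⟩) <;>
          simp only [hcf, hbCf, hd, hbD, Sum.elim_inl, Sum.elim_inr]
        · by_cases h0 : (i : ℕ) = 0
          · rw [if_pos h0, if_pos h0, hsq]
            exact mul_inv_cancel₀ hcpos.ne'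
          · rw [if_neg h0, if_neg h0]
            split <;> norm_num
        · norm_num
      intro p q
      rw [hfb p, hfb q]
      simp only [map_smul, LinearMap.smul_apply, smul_eq_mul, auxForm_basis]
      by_cases hpq : p = q
      · subst hpq
        simp only [if_pos rfl]
        rw [← mul_assoc]
        exact hcfd p
      · simp [hpq]
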